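/- arXiv:1111.6260 — 2 statements merged into one kernel-verified Lean document; each statement's English description precedes it below -/
import Mathlib

section
/- On S³ ⊂ ℂ² with positive weights a1, a2, the Lie bracket of the Reeb field ξ_a(z) = (i a1 z1, i a2 z2) with Z₁(z) = σ(z)^{-1}(−i|z₂|²z₁, i|z₁|²z₂) vanishes: [ξ_a, Z₁] = 0, where σ(z) = a1|z₁|² + a2|z₂|². -/
open Complex ContinuousLinearMap

/-- On `S³ ⊂ ℂ²`, the Lie bracket `[ξ_a, Z₁] = D Z₁ · ξ_a − D ξ_a · Z₁` of the Reeb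
field `ξ_a(z) = (i a1 z₁, i a2 z₂)` with
`Z₁(z) = σ(z)⁻¹ (−i|z₂|² z₁, i|z₁|² z₂)`, `σ(z) = a1|z₁|² + a2|z₂|²`,
vanishes at every point of the unit sphere. -/
theorem bracket_reeb_Z1_vanishes (a1 a2 : ℝ) (h1 : 0 < a1) (h2 : 0 < a2) :
    let ξ : ℂ × ℂ → ℂ × ℂ := fun z => (Complex.I * (a1 : ℂ) * z.1, Complex.I * (a2 : ℂ) * z.2)
    let Z1 : ℂ × ℂ → ℂ × ℂ := fun z =>
      ((a1 * Complex.normSq z.1 + a2 * Complex.normSq z.2)⁻¹ : ℝ) •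
        ((-Complex.I * (Complex.normSq z.2 : ℂ) * z.1,
          Complex.I * (Complex.normSq z.1 : ℂ) * z.2) : ℂ × ℂ)
    ∀ z : ℂ × ℂ, Complex.normSq z.1 + Complex.normSq z.2 = 1 →
      fderiv ℝ Z1 z (ξ z) - fderiv ℝ ξ z (Z1 z) = 0 := by
  intro ξ Z1 z hz
  have hnormSq : ∀ w : ℂ, HasFDerivAt Complex.normSq (2 • (innerSL ℝ w)) w := by
    intro w
    have h := (hasFDerivAt_id w).norm_sq
    simpa [← Complex.normSq_eq_norm_sq] using h
  set n1 := Complex.normSq z.1 with hn1def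
  set n2 := Complex.normSq z.2 with hn2def
  have h1' : 0 ≤ n1 := Complex.normSq_nonneg _
  have h2' : 0 ≤ n2 := Complex.normSq_nonneg _
  have hσpos : 0 < a1 * n1 + a2 * n2 := by
    rcases le_total a1 a2 with h | h
    · have : a1 * n2 ≤ a2 * n2 := mul_le_mul_of_nonneg_right h h2'
      nlinarith
    · have : a2 * n1 ≤ a1 * n1 := mul_le_mul_of_nonneg_right h h1'
      nlinarith
  have hσne : a1 * n1 + a2 * n2 ≠ 0 := ne_of_gt hσpos
  set D1 : (ℂ × ℂ) →L[ℝ] ℝ := (2 • (innerSL ℝ z.1)).comp (fst ℝ ℂ ℂ) with hD1def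
  set D2 : (ℂ × ℂ) →L[ℝ] ℝ := (2 • (innerSL ℝ z.2)).comp (snd ℝ ℂ ℂ) with hD2def
  have hn1 : HasFDerivAt (fun p : ℂ × ℂ => Complex.normSq p.1) D1 z :=
    (hnormSq z.1).comp z (hasFDerivAt_fst)
  have hn2 : HasFDerivAt (fun p : ℂ × ℂ => Complex.normSq p.2) D2 z :=
    (hnormSq z.2).comp z (hasFDerivAt_snd)
  have hσ : HasFDerivAt (fun p : ℂ × ℂ => a1 * Complex.normSq p.1 + a2 * Complex.normSq p.2)
      (a1 • D1 + a2 • D2) z := (hn1.const_mul a1).add (hn2.const_mul a2)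
  have hinv : HasFDerivAt
      (fun p : ℂ × ℂ => (a1 * Complex.normSq p.1 + a2 * Complex.normSq p.2)⁻¹)
      ((-mulLeftRight ℝ ℝ (a1 * n1 + a2 * n2)⁻¹ (a1 * n1 + a2 * n2)⁻¹).comp
        (a1 • D1 + a2 • D2)) z :=
    (hasFDerivAt_inv' hσne).comp z hσ
  have hfun1 : (fun p : ℂ × ℂ => -Complex.I * (Complex.normSq p.2 : ℂ) * p.1)
      = fun p : ℂ × ℂ => Complex.normSq p.2 • ((-Complex.I) • p.1) := by
    funext p
    simp [Complex.real_smul, smul_eq_mul]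
    ring
  have hfun2 : (fun p : ℂ × ℂ => Complex.I * (Complex.normSq p.1 : ℂ) * p.2)
      = fun p : ℂ × ℂ => Complex.normSq p.1 • (Complex.I • p.2) := by
    funext p
    simp [Complex.real_smul, smul_eq_mul]
    ring
  have hg1 : HasFDerivAt (fun p : ℂ × ℂ => -Complex.I * (Complex.normSq p.2 : ℂ) * p.1)
      (n2 • ((-Complex.I) • (fst ℝ ℂ ℂ)) + D2.smulRight ((-Complex.I) • z.1)) z := by
    rw [hfun1]
    exact hn2.smul ((hasFDerivAt_fst (𝕜 := ℝ) (p := z)).const_smul (-Complex.I))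
  have hg2 : HasFDerivAt (fun p : ℂ × ℂ => Complex.I * (Complex.normSq p.1 : ℂ) * p.2)
      (n1 • (Complex.I • (snd ℝ ℂ ℂ)) + D1.smulRight (Complex.I • z.2)) z := by
    rw [hfun2]
    exact hn1.smul ((hasFDerivAt_snd (𝕜 := ℝ) (p := z)).const_smul Complex.I)
  have hZ1 : HasFDerivAt Z1
      (((a1 * n1 + a2 * n2)⁻¹ : ℝ) •
          ((n2 • ((-Complex.I) • (fst ℝ ℂ ℂ)) + D2.smulRight ((-Complex.I) • z.1)).prod
            (n1 • (Complex.I • (snd ℝ ℂ ℂ)) + D1.smulRight (Complex.I • z.2)))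
        + ((-mulLeftRight ℝ ℝ (a1 * n1 + a2 * n2)⁻¹ (a1 * n1 + a2 * n2)⁻¹).comp
            (a1 • D1 + a2 • D2)).smulRight
            ((-Complex.I * (n2 : ℂ) * z.1, Complex.I * (n1 : ℂ) * z.2) : ℂ × ℂ)) z :=
    hinv.smul (hg1.prodMk hg2)
  have hξ : HasFDerivAt ξ
      (((Complex.I * (a1 : ℂ)) • (fst ℝ ℂ ℂ)).prod ((Complex.I * (a2 : ℂ)) • (snd ℝ ℂ ℂ))) z :=
    ((hasFDerivAt_fst (𝕜 := ℝ) (p := z)).const_smul (Complex.I * a1)).prodMk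
      ((hasFDerivAt_snd (𝕜 := ℝ) (p := z)).const_smul (Complex.I * a2))
  have hkey1 : D1 (ξ z) = 0 := by
    simp [hD1def, ξ, RCLike.inner_apply, Complex.mul_re, Complex.mul_im]
    ring
  have hkey2 : D2 (ξ z) = 0 := by
    simp [hD2def, ξ, RCLike.inner_apply, Complex.mul_re, Complex.mul_im]
    ring
  rw [hZ1.fderiv, hξ.fderiv]
  simp only [ContinuousLinearMap.add_apply, ContinuousLinearMap.smul_apply,
    ContinuousLinearMap.comp_apply, ContinuousLinearMap.prod_apply,
    ContinuousLinearMap.smulRight_apply, ContinuousLinearMap.coe_fst',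
    ContinuousLinearMap.coe_snd', hkey1, hkey2, smul_zero, zero_smul, add_zero,
    map_zero, ContinuousLinearMap.neg_apply]
  simp only [Z1, ξ, Prod.smul_mk, Prod.mk_sub_mk, Prod.mk_eq_zero]
  constructor <;>
  · simp [Complex.real_smul, smul_eq_mul]
    ring
end

section
/- On S³ ⊂ ℂ² with positive weights a1, a2, the vector fields Z₁(z) = σ^{-1}(−i|z₂|²z₁, i|z₁|²z₂) and Z₂(z) = σ^{-1}(|z₂|²z₁, −|z₁|²z₂) satisfy [Z₁, Z₂] = −2σ^{-3}|z₁|²|z₂|² ξ_a at every point of S³, where ξ_a(z) = (i a1 z1, i a2 z2) and σ = a1|z₁|² + a2|z₂|². -/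
open Complex

/-- On `S³ ⊂ ℂ²`, the Lie bracket `[Z₁, Z₂] = D Z₂ · Z₁ − D Z₁ · Z₂` of
`Z₁(z) = σ⁻¹(−i|z₂|²z₁, i|z₁|²z₂)` and `Z₂(z) = σ⁻¹(|z₂|²z₁, −|z₁|²z₂)` equals
`−2σ⁻³|z₁|²|z₂|² ξ_a`, where `ξ_a(z) = (i a1 z₁, i a2 z₂)` and
`σ = a1|z₁|² + a2|z₂|²`. -/
theorem bracket_Z1_Z2 (a1 a2 : ℝ) (h1 : 0 < a1) (h2 : 0 < a2) :
    let ξ : ℂ × ℂ → ℂ × ℂ := fun z => (Complex.I * (a1 : ℂ) * z.1, Complex.I * (a2 : ℂ) * z.2)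
    let Z1 : ℂ × ℂ → ℂ × ℂ := fun z =>
      ((a1 * Complex.normSq z.1 + a2 * Complex.normSq z.2)⁻¹ : ℝ) •
        ((-Complex.I * (Complex.normSq z.2 : ℂ) * z.1,
          Complex.I * (Complex.normSq z.1 : ℂ) * z.2) : ℂ × ℂ)
    let Z2 : ℂ × ℂ → ℂ × ℂ := fun z =>
      ((a1 * Complex.normSq z.1 + a2 * Complex.normSq z.2)⁻¹ : ℝ) •
        (((Complex.normSq z.2 : ℂ) * z.1,
          -(Complex.normSq z.1 : ℂ) * z.2) : ℂ × ℂ)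
    ∀ z : ℂ × ℂ, Complex.normSq z.1 + Complex.normSq z.2 = 1 →
      fderiv ℝ Z2 z (Z1 z) - fderiv ℝ Z1 z (Z2 z) =
        (-2 * ((a1 * Complex.normSq z.1 + a2 * Complex.normSq z.2)⁻¹) ^ 3
            * Complex.normSq z.1 * Complex.normSq z.2 : ℝ) • ξ z := by
  intro ξ Z1 Z2 z hz
  have hσpos : 0 < a1 * normSq z.1 + a2 * normSq z.2 := by
    rcases eq_or_lt_of_le (normSq_nonneg z.1) with h | h
    · have hq : normSq z.2 = 1 := by rw [← hz, ← h]; ring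
      rw [← h, hq]; simpa using h2
    · nlinarith [mul_pos h1 h, mul_nonneg h2.le (normSq_nonneg z.2)]
  have hσ : a1 * normSq z.1 + a2 * normSq z.2 ≠ 0 := ne_of_gt hσpos
  have hre1 : HasFDerivAt (fun w : ℂ × ℂ => w.1.re)
      (Complex.reCLM.comp (ContinuousLinearMap.fst ℝ ℂ ℂ)) z :=
    (Complex.reCLM.comp (ContinuousLinearMap.fst ℝ ℂ ℂ)).hasFDerivAt
  have him1 : HasFDerivAt (fun w : ℂ × ℂ => w.1.im)
      (Complex.imCLM.comp (ContinuousLinearMap.fst ℝ ℂ ℂ)) z :=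
    (Complex.imCLM.comp (ContinuousLinearMap.fst ℝ ℂ ℂ)).hasFDerivAt
  have hre2 : HasFDerivAt (fun w : ℂ × ℂ => w.2.re)
      (Complex.reCLM.comp (ContinuousLinearMap.snd ℝ ℂ ℂ)) z :=
    (Complex.reCLM.comp (ContinuousLinearMap.snd ℝ ℂ ℂ)).hasFDerivAt
  have him2 : HasFDerivAt (fun w : ℂ × ℂ => w.2.im)
      (Complex.imCLM.comp (ContinuousLinearMap.snd ℝ ℂ ℂ)) z :=
    (Complex.imCLM.comp (ContinuousLinearMap.snd ℝ ℂ ℂ)).hasFDerivAt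
  have hn1 := (hre1.fun_mul hre1).fun_add (him1.fun_mul him1)
  have hn2 := (hre2.fun_mul hre2).fun_add (him2.fun_mul him2)
  simp only [← Complex.normSq_apply] at hn1 hn2
  have hσd := (hn1.const_mul a1).fun_add (hn2.const_mul a2)
  have hσinv := (hasFDerivAt_inv' (𝕜 := ℝ) hσ).comp z hσd
  simp only [Function.comp_def] at hσinv
  have hnc1 := Complex.ofRealCLM.hasFDerivAt.comp z hn1
  have hnc2 := Complex.ofRealCLM.hasFDerivAt.comp z hn2
  simp only [Function.comp_def, Complex.ofRealCLM_apply] at hnc1 hnc2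
  have hfst : HasFDerivAt (fun w : ℂ × ℂ => w.1) (ContinuousLinearMap.fst ℝ ℂ ℂ) z :=
    (ContinuousLinearMap.fst ℝ ℂ ℂ).hasFDerivAt
  have hsnd : HasFDerivAt (fun w : ℂ × ℂ => w.2) (ContinuousLinearMap.snd ℝ ℂ ℂ) z :=
    (ContinuousLinearMap.snd ℝ ℂ ℂ).hasFDerivAt
  have hg11 := (hnc2.const_mul (-Complex.I)).fun_mul hfst
  have hg12 := (hnc1.const_mul Complex.I).fun_mul hsnd
  have hZ1 : HasFDerivAt Z1 _ z := hσinv.fun_smul (hg11.prodMk hg12)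
  have hg21 := hnc2.fun_mul hfst
  have hg22 := (hnc1.fun_neg).fun_mul hsnd
  have hZ2 : HasFDerivAt Z2 _ z := hσinv.fun_smul (hg21.prodMk hg22)
  rw [hZ1.fderiv, hZ2.fderiv]
  show _ - _ = (_ : ℝ) • (Complex.I * (a1 : ℂ) * z.1, Complex.I * (a2 : ℂ) * z.2)
  simp only [Z1, Z2]
  simp only [ContinuousLinearMap.add_apply, ContinuousLinearMap.smul_apply,
    ContinuousLinearMap.smulRight_apply, ContinuousLinearMap.comp_apply,
    ContinuousLinearMap.coe_comp', Function.comp_apply,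
    ContinuousLinearMap.prod_apply, ContinuousLinearMap.coe_fst',
    ContinuousLinearMap.coe_snd', ContinuousLinearMap.neg_apply,
    ContinuousLinearMap.mulLeftRight_apply,
    Complex.reCLM_apply, Complex.imCLM_apply, Complex.ofRealCLM_apply,
    Prod.smul_mk, Prod.mk_add_mk, Prod.mk_sub_mk, smul_eq_mul]
  have hz' := hz
  have hs := mul_inv_cancel₀ hσ
  simp only [Complex.normSq_apply] at hz' hs ⊢
  rw [Prod.mk.injEq]
  constructor
  · rw [Complex.ext_iff]
    constructor
    · simp only [Complex.real_smul, Complex.mul_re, Complex.mul_im, Complex.add_re,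
        Complex.add_im, Complex.sub_re, Complex.sub_im, Complex.neg_re, Complex.neg_im,
        Complex.ofReal_re, Complex.ofReal_im, Complex.I_re, Complex.I_im,
        Complex.mul_re, Complex.mul_im]
      linear_combination (-2*(z.1.re*z.1.re + z.1.im*z.1.im)*(z.2.re*z.2.re + z.2.im*z.2.im)*(a1*(z.1.re*z.1.re + z.1.im*z.1.im) + a2*(z.2.re*z.2.re + z.2.im*z.2.im))⁻¹^2*z.1.im) * hs + (2*(z.1.re*z.1.re + z.1.im*z.1.im)*(z.2.re*z.2.re + z.2.im*z.2.im)*(a1*(z.1.re*z.1.re + z.1.im*z.1.im) + a2*(z.2.re*z.2.re + z.2.im*z.2.im))⁻¹^3*a1*z.1.im) * hz'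
    · simp only [Complex.real_smul, Complex.mul_re, Complex.mul_im, Complex.add_re,
        Complex.add_im, Complex.sub_re, Complex.sub_im, Complex.neg_re, Complex.neg_im,
        Complex.ofReal_re, Complex.ofReal_im, Complex.I_re, Complex.I_im,
        Complex.mul_re, Complex.mul_im]
      linear_combination (2*(z.1.re*z.1.re + z.1.im*z.1.im)*(z.2.re*z.2.re + z.2.im*z.2.im)*(a1*(z.1.re*z.1.re + z.1.im*z.1.im) + a2*(z.2.re*z.2.re + z.2.im*z.2.im))⁻¹^2*z.1.re) * hs + (-2*(z.1.re*z.1.re + z.1.im*z.1.im)*(z.2.re*z.2.re + z.2.im*z.2.im)*(a1*(z.1.re*z.1.re + z.1.im*z.1.im) + a2*(z.2.re*z.2.re + z.2.im*z.2.im))⁻¹^3*a1*z.1.re) * hz'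
  · rw [Complex.ext_iff]
    constructor
    · simp only [Complex.real_smul, Complex.mul_re, Complex.mul_im, Complex.add_re,
        Complex.add_im, Complex.sub_re, Complex.sub_im, Complex.neg_re, Complex.neg_im,
        Complex.ofReal_re, Complex.ofReal_im, Complex.I_re, Complex.I_im,
        Complex.mul_re, Complex.mul_im]
      linear_combination (-2*(z.1.re*z.1.re + z.1.im*z.1.im)*(z.2.re*z.2.re + z.2.im*z.2.im)*(a1*(z.1.re*z.1.re + z.1.im*z.1.im) + a2*(z.2.re*z.2.re + z.2.im*z.2.im))⁻¹^2*z.2.im) * hs + (2*(z.1.re*z.1.re + z.1.im*z.1.im)*(z.2.re*z.2.re + z.2.im*z.2.im)*(a1*(z.1.re*z.1.re + z.1.im*z.1.im) + a2*(z.2.re*z.2.re + z.2.im*z.2.im))⁻¹^3*a2*z.2.im) * hz'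
    · simp only [Complex.real_smul, Complex.mul_re, Complex.mul_im, Complex.add_re,
        Complex.add_im, Complex.sub_re, Complex.sub_im, Complex.neg_re, Complex.neg_im,
        Complex.ofReal_re, Complex.ofReal_im, Complex.I_re, Complex.I_im,
        Complex.mul_re, Complex.mul_im]
      linear_combination (2*(z.1.re*z.1.re + z.1.im*z.1.im)*(z.2.re*z.2.re + z.2.im*z.2.im)*(a1*(z.1.re*z.1.re + z.1.im*z.1.im) + a2*(z.2.re*z.2.re + z.2.im*z.2.im))⁻¹^2*z.2.re) * hs + (-2*(z.1.re*z.1.re + z.1.im*z.1.im)*(z.2.re*z.2.re + z.2.im*z.2.im)*(a1*(z.1.re*z.1.re + z.1.im*z.1.im) + a2*(z.2.re*z.2.re + z.2.im*z.2.im))⁻¹^3*a2*z.2.re) * hz'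
end
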